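/- arXiv:1409.7610 — 8 statements merged into one kernel-verified Lean document; each statement's English description precedes it below -/
import Mathlib

section
/- Let T : U → U be a bounded linear operator on a Hilbert space U and u† ∈ U. Then u† ∈ Range(T*) if and only if there exists a constant C > 0 such that ⟨u†, v⟩ ≤ C ‖Tv‖ for all v ∈ U. -/
/-- Let `T : U → U` be a bounded linear operator on a real Hilbert space `U`
and `u† ∈ U`. Then `u† ∈ Range(T*)` iff there exists `C > 0` with `⟨u†, v⟩ ≤ C ‖Tv‖` for all
`v ∈ U`. -/
theorem stmt3 {U : Type*} [NormedAddCommGroup U] [InnerProductSpace ℝ U] [CompleteSpace U]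
    (T : U →L[ℝ] U) (udag : U) :
    (∃ w : U, ContinuousLinearMap.adjoint T w = udag) ↔
      ∃ C : ℝ, 0 < C ∧ ∀ v : U, (inner ℝ udag v : ℝ) ≤ C * ‖T v‖ := by
  constructor
  · rintro ⟨w, rfl⟩
    refine ⟨‖w‖ + 1, by positivity, fun v => ?_⟩
    have h1 : (inner ℝ (ContinuousLinearMap.adjoint T w) v : ℝ) = inner ℝ w (T v) :=
      ContinuousLinearMap.adjoint_inner_left T v w
    calc (inner ℝ (ContinuousLinearMap.adjoint T w) v : ℝ) = inner ℝ w (T v) := h1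
      _ ≤ ‖w‖ * ‖T v‖ := real_inner_le_norm w (T v)
      _ ≤ (‖w‖ + 1) * ‖T v‖ := by
          apply mul_le_mul_of_nonneg_right (by linarith) (norm_nonneg _)
  · rintro ⟨C, hC, hbound⟩
    -- key: |⟨udag, v⟩| ≤ C ‖T v‖
    have habs : ∀ v : U, |(inner ℝ udag v : ℝ)| ≤ C * ‖T v‖ := by
      intro v
      rw [abs_le]
      constructor
      · have := hbound (-v)
        rw [inner_neg_right, map_neg, norm_neg] at this
        linarith
      · exact hbound v
    -- inner udag vanishes on ker T
    have hker : LinearMap.ker (T : U →ₗ[ℝ] U) ≤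
        LinearMap.ker ((innerSL ℝ udag : U →L[ℝ] ℝ) : U →ₗ[ℝ] ℝ) := by
      intro v hv
      have hv' : T v = 0 := hv
      have := habs v
      rw [hv', norm_zero, mul_zero] at this
      simpa [LinearMap.mem_ker] using abs_eq_zero.mp (le_antisymm this (abs_nonneg _))
    -- lift to quotient, compose with first iso theorem
    set Tl : U →ₗ[ℝ] U := (T : U →ₗ[ℝ] U) with hTl
    let φbar : (U ⧸ LinearMap.ker Tl) →ₗ[ℝ] ℝ :=
      (LinearMap.ker Tl).liftQ ((innerSL ℝ udag : U →L[ℝ] ℝ) : U →ₗ[ℝ] ℝ) hker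
    let f₀ : (LinearMap.range Tl) →ₗ[ℝ] ℝ :=
      φbar ∘ₗ (Tl.quotKerEquivRange.symm : (LinearMap.range Tl) →ₗ[ℝ] (U ⧸ LinearMap.ker Tl))
    have hf₀ : ∀ (v : U) (h : T v ∈ LinearMap.range Tl), f₀ ⟨T v, h⟩ = inner ℝ udag v := by
      intro v h
      have : Tl.quotKerEquivRange.symm ⟨T v, h⟩ = Submodule.Quotient.mk v := by
        rw [LinearEquiv.symm_apply_eq]
        rfl
      have key : f₀ ⟨T v, h⟩ = φbar (Tl.quotKerEquivRange.symm ⟨T v, h⟩) := rfl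
      rw [key, this]
      rfl
    have hf₀bound : ∀ x : LinearMap.range Tl, ‖f₀ x‖ ≤ C * ‖x‖ := by
      rintro ⟨x, hx⟩
      obtain ⟨v, rfl⟩ := hx
      have : Tl v = T v := rfl
      rw [show (⟨Tl v, ⟨v, rfl⟩⟩ : LinearMap.range Tl) = ⟨T v, ⟨v, rfl⟩⟩ from rfl]
      rw [hf₀ v ⟨v, rfl⟩]
      simpa using habs v
    let f : (LinearMap.range Tl) →L[ℝ] ℝ := LinearMap.mkContinuous f₀ C hf₀bound
    obtain ⟨g, hg, -⟩ := exists_extension_norm_eq (LinearMap.range Tl) f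
    refine ⟨(InnerProductSpace.toDual ℝ U).symm g, ?_⟩
    apply ext_inner_right ℝ
    intro v
    rw [ContinuousLinearMap.adjoint_inner_left]
    rw [InnerProductSpace.toDual_symm_apply]
    have : g (T v) = f ⟨T v, ⟨v, rfl⟩⟩ := hg ⟨T v, ⟨v, rfl⟩⟩
    rw [this]
    show f₀ ⟨T v, ⟨v, rfl⟩⟩ = inner ℝ udag v
    rw [hf₀ v ⟨v, rfl⟩]
end

section
/- If there exist ν ∈ (0,1] and β ≥ 0 such that 2⟨u†,u⟩ ≤ β ‖Lu‖^ν ‖u‖^(1-ν) for every u ∈ U, then 2⟨u†,u⟩ ≤ β ‖L*Lu‖^(ν/2) ‖u‖^(1-ν/2) for every u ∈ U. -/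
/-- If there exist `ν ∈ (0,1]` and `β ≥ 0` such that
`2⟨u†,u⟩ ≤ β ‖Lu‖^ν ‖u‖^(1-ν)` for every `u ∈ U`, then
`2⟨u†,u⟩ ≤ β ‖L*Lu‖^(ν/2) ‖u‖^(1-ν/2)` for every `u ∈ U`. -/
theorem stmt4 {U V : Type*} [NormedAddCommGroup U] [InnerProductSpace ℝ U] [CompleteSpace U]
    [NormedAddCommGroup V] [InnerProductSpace ℝ V] [CompleteSpace V]
    (L : U →L[ℝ] V) (udag : U) (ν β : ℝ) (hν0 : 0 < ν) (hν1 : ν ≤ 1) (hβ : 0 ≤ β)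
    (h : ∀ u : U, 2 * (inner ℝ udag u : ℝ) ≤ β * ‖L u‖ ^ ν * ‖u‖ ^ (1 - ν)) :
    ∀ u : U, 2 * (inner ℝ udag u : ℝ) ≤
      β * ‖ContinuousLinearMap.adjoint L (L u)‖ ^ (ν / 2) * ‖u‖ ^ (1 - ν / 2) := by
  intro u
  refine (h u).trans ?_
  set A := ‖ContinuousLinearMap.adjoint L (L u)‖
  have hA : 0 ≤ A := norm_nonneg _
  have hu : 0 ≤ ‖u‖ := norm_nonneg u
  have hsq : ‖L u‖ ^ (2 : ℝ) ≤ A * ‖u‖ := by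
    have h1 : ‖L u‖ ^ (2 : ℝ) = (inner ℝ (ContinuousLinearMap.adjoint L (L u)) u : ℝ) := by
      rw [ContinuousLinearMap.adjoint_inner_left, real_inner_self_eq_norm_sq,
        Real.rpow_two]
    rw [h1]
    exact (real_inner_le_norm _ _)
  have hLν : ‖L u‖ ^ ν ≤ (A * ‖u‖) ^ (ν / 2) := by
    have : ‖L u‖ ^ ν = (‖L u‖ ^ (2:ℝ)) ^ (ν / 2) := by
      rw [← Real.rpow_mul (norm_nonneg _)]
      congr 1; ring
    rw [this]
    exact Real.rpow_le_rpow (Real.rpow_nonneg (norm_nonneg _) _) hsq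
      (by positivity)
  have key : β * ‖L u‖ ^ ν * ‖u‖ ^ (1 - ν) ≤
      β * ((A * ‖u‖) ^ (ν / 2)) * ‖u‖ ^ (1 - ν) := by
    have := mul_le_mul_of_nonneg_left hLν hβ
    exact mul_le_mul_of_nonneg_right this (Real.rpow_nonneg hu _)
  refine key.trans (le_of_eq ?_)
  have h2 : ‖u‖ ^ (ν / 2) * ‖u‖ ^ (1 - ν) = ‖u‖ ^ (1 - ν / 2) := by
    rw [← Real.rpow_add' hu (by intro hc; nlinarith)]
    congr 1; ring
  rw [Real.mul_rpow hA hu, mul_assoc β, mul_assoc (A ^ (ν / 2)), h2]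
  ring
end

section
/- There exists β ≥ 0 such that ⟨u†,u⟩ ≤ β ‖L*Lu‖ for all u ∈ U if and only if u† ∈ Range(L*L). -/
open ContinuousLinearMap in
/-- There exists `β ≥ 0` such that `⟨u†,u⟩ ≤ β ‖L*Lu‖` for all `u ∈ U`
iff `u† ∈ Range(L*L)`. -/
theorem stmt5 {U V : Type*} [NormedAddCommGroup U] [InnerProductSpace ℝ U] [CompleteSpace U]
    [NormedAddCommGroup V] [InnerProductSpace ℝ V] [CompleteSpace V]
    (L : U →L[ℝ] V) (udag : U) :
    (∃ β : ℝ, 0 ≤ β ∧ ∀ u : U,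
        (inner ℝ udag u : ℝ) ≤ β * ‖ContinuousLinearMap.adjoint L (L u)‖) ↔
      ∃ w : U, ContinuousLinearMap.adjoint L (L w) = udag := by
  set T : U →L[ℝ] U := (ContinuousLinearMap.adjoint L).comp L with hT
  have hTadj : ∀ w u : U, (inner ℝ (T w) u : ℝ) = inner ℝ w (T u) := by
    intro w u
    simp [hT, ContinuousLinearMap.adjoint_inner_left, ContinuousLinearMap.adjoint_inner_right]
  constructor
  · rintro ⟨β, hβ, hbound⟩
    -- |⟨u†,u⟩| ≤ β ‖T u‖
    have habs : ∀ u : U, |(inner ℝ udag u : ℝ)| ≤ β * ‖T u‖ := by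
      intro u
      have hTu : ‖T u‖ = ‖ContinuousLinearMap.adjoint L (L u)‖ := rfl
      rw [abs_le, hTu]
      constructor
      · have := hbound (-u)
        simp only [inner_neg_right, map_neg, norm_neg] at this
        linarith
      · exact hbound u
    set Tl : U →ₗ[ℝ] U := T.toLinearMap with hTl
    set g : U →ₗ[ℝ] ℝ := (innerSL ℝ udag).toLinearMap with hg
    have hker : LinearMap.ker Tl ≤ LinearMap.ker g := by
      intro u hu
      have hTu : T u = 0 := hu
      have := habs u
      rw [hTu] at this
      simp only [norm_zero, mul_zero] at this
      have : (inner ℝ udag u : ℝ) = 0 := abs_nonpos_iff.mp (by linarith [this])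
      simpa [hg] using this
    set f : LinearMap.range Tl →ₗ[ℝ] ℝ :=
      ((LinearMap.ker Tl).liftQ g hker).comp (Tl.quotKerEquivRange.symm.toLinearMap) with hf
    have hfT : ∀ u : U, f ⟨Tl u, LinearMap.mem_range_self Tl u⟩ = inner ℝ udag u := by
      intro u
      have h1 : Tl.quotKerEquivRange.symm ⟨Tl u, LinearMap.mem_range_self Tl u⟩ =
          Submodule.Quotient.mk u := by
        rw [LinearEquiv.symm_apply_eq]
        rfl
      simp [hf, h1, hg]
    have hfbound : ∀ v : LinearMap.range Tl, ‖f v‖ ≤ β * ‖v‖ := by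
      rintro ⟨v, u, rfl⟩
      rw [show (⟨Tl u, ⟨u, rfl⟩⟩ : LinearMap.range Tl) = ⟨Tl u, LinearMap.mem_range_self Tl u⟩ from rfl,
        hfT u]
      simpa [hTl] using habs u
    set fc : LinearMap.range Tl →L[ℝ] ℝ := f.mkContinuous β hfbound with hfc
    obtain ⟨G, hGext, -⟩ := exists_extension_norm_eq (LinearMap.range Tl) fc
    set w : U := (InnerProductSpace.toDual ℝ U).symm G with hw
    refine ⟨w, ?_⟩
    have key : ∀ u : U, (inner ℝ (T w) u : ℝ) = inner ℝ udag u := by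
      intro u
      rw [hTadj]
      have : (inner ℝ w (T u) : ℝ) = G (T u) := by
        simp [hw, InnerProductSpace.toDual_symm_apply]
      rw [this,
        show G (T u) = G ((⟨Tl u, LinearMap.mem_range_self Tl u⟩ : LinearMap.range Tl) : U) from rfl,
        hGext ⟨Tl u, LinearMap.mem_range_self Tl u⟩]
      exact hfT u
    have : T w = udag := by
      apply ext_inner_right ℝ
      intro u
      exact key u
    exact this
  · rintro ⟨w, rfl⟩
    refine ⟨‖w‖, norm_nonneg w, fun u => ?_⟩
    calc (inner ℝ (T w) u : ℝ) = inner ℝ w (T u) := hTadj w u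
      _ ≤ ‖w‖ * ‖T u‖ := real_inner_le_norm w (T u)
end

section
/- Let U be a separable real Hilbert space with orthonormal basis (φₙ)ₙ≥1, L : U → U the diagonal operator L φₙ = 2^(−n) φₙ, and u† = Σₙ 2^(−n/2) φₙ. Then for every u ∈ U, ⟨u†, u⟩ ≤ 2√2 · ‖u‖^(1/2) ‖Lu‖^(1/2). -/
set_option maxHeartbeats 1000000

private lemma amgm_aux {x : ℝ} (hx : 0 < x) (a b : ℝ) :
    a * b ≤ (x * a ^ 2 + b ^ 2 / x) / 2 := by
  rw [le_div_iff₀ (by norm_num : (0:ℝ) < 2), ← sub_nonneg]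
  have h : x * a ^ 2 + b ^ 2 / x - a * b * 2 = (x * a - b) ^ 2 / x := by
    field_simp; ring
  rw [h]; positivity

private lemma rpow_neg_eq (n : ℕ) : (2:ℝ) ^ (-((n:ℝ)+1)) = ((1:ℝ)/2) ^ (n+1) := by
  rw [one_div, inv_pow, ← Real.rpow_natCast 2 (n+1), ← Real.rpow_neg (by norm_num)]
  push_cast; ring_nf

private lemma csq (n : ℕ) : ((2:ℝ) ^ (-((n:ℝ)+1)/2)) ^ 2 = (2:ℝ) ^ (-((n:ℝ)+1)) := by
  rw [sq, ← Real.rpow_add (by norm_num : (0:ℝ) < 2)]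
  ring_nf

private lemma core (γ : ℕ → ℝ) (S A B : ℝ) (hA0 : 0 ≤ A) (hB0 : 0 ≤ B)
    (hS : HasSum (fun n : ℕ => (2:ℝ) ^ (-((n:ℝ)+1)/2) * γ n) S)
    (hA : HasSum (fun n : ℕ => ((2:ℝ) ^ (-((n:ℝ)+1)) * γ n) ^ 2) (A ^ 2))
    (hB : HasSum (fun n : ℕ => γ n ^ 2) (B ^ 2)) :
    S ≤ 2 * Real.sqrt 2 * Real.sqrt B * Real.sqrt A := by
  set c : ℕ → ℝ := fun n => (2:ℝ) ^ (-((n:ℝ)+1)/2) with hc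
  have hcpos : ∀ n : ℕ, 0 < c n := fun n => Real.rpow_pos_of_pos (by norm_num) _
  rcases eq_or_lt_of_le hB0 with hBz | hBpos
  · -- B = 0
    have hγ : ∀ n : ℕ, γ n = 0 := by
      intro n
      have h1 : γ n ^ 2 ≤ B ^ 2 := le_hasSum hB n (fun _ _ => sq_nonneg _)
      rw [← hBz] at h1
      nlinarith [sq_nonneg (γ n)]
    have hz : HasSum (fun n => c n * γ n) 0 := by
      simpa [hγ] using (hasSum_zero : HasSum (fun _ : ℕ => (0:ℝ)) 0)
    rw [hS.unique hz]
    positivity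
  · -- B > 0
    have hApos : 0 < A := by
      rcases eq_or_lt_of_le hA0 with hAz | h; swap; · exact h
      exfalso
      have hγ : ∀ n : ℕ, γ n = 0 := by
        intro n
        have h1 : ((2:ℝ) ^ (-((n:ℝ)+1)) * γ n) ^ 2 ≤ A ^ 2 :=
          le_hasSum hA n (fun _ _ => sq_nonneg _)
        rw [← hAz] at h1
        have h2 : (2:ℝ) ^ (-((n:ℝ)+1)) * γ n = 0 := by
          nlinarith [sq_nonneg ((2:ℝ) ^ (-((n:ℝ)+1)) * γ n)]
        have h3 : (0:ℝ) < (2:ℝ) ^ (-((n:ℝ)+1)) := Real.rpow_pos_of_pos (by norm_num) _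
        exact (mul_eq_zero.mp h2).resolve_left (ne_of_gt h3)
      have hz : HasSum (fun n => γ n ^ 2) 0 := by
        simpa [hγ] using (hasSum_zero : HasSum (fun _ : ℕ => (0:ℝ)) 0)
      nlinarith [hB.unique hz]
    -- 2A ≤ B
    have h2AB : 2 * A ≤ B := by
      have hterm : ∀ n : ℕ, 4 * ((2:ℝ) ^ (-((n:ℝ)+1)) * γ n) ^ 2 ≤ γ n ^ 2 := by
        intro n
        have hd : (2:ℝ) ^ (-((n:ℝ)+1)) ≤ 1/2 := by
          rw [rpow_neg_eq]
          calc ((1:ℝ)/2) ^ (n+1) ≤ ((1:ℝ)/2) ^ 1 :=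
                pow_le_pow_of_le_one (by norm_num) (by norm_num) (by omega)
            _ = 1/2 := pow_one _
        have hd0 : (0:ℝ) < (2:ℝ) ^ (-((n:ℝ)+1)) := Real.rpow_pos_of_pos (by norm_num) _
        have hdsq : (2:ℝ) ^ (-((n:ℝ)+1)) * (2:ℝ) ^ (-((n:ℝ)+1)) ≤ 1/4 := by
          nlinarith
        nlinarith [mul_nonneg (sub_nonneg.2 hdsq) (sq_nonneg (γ n))]
      have h4 : 4 * A ^ 2 ≤ B ^ 2 := hasSum_le hterm (hA.mul_left 4) hB
      nlinarith
    set r : ℝ := B / A with hr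
    have hrpos : 0 < r := div_pos hBpos hApos
    have hr2 : 2 ≤ r := (le_div_iff₀ hApos).2 (by linarith)
    obtain ⟨N, hs1, hs2⟩ : ∃ N : ℕ, (2:ℝ) ^ N ≤ r ∧ r ≤ 2 * 2 ^ N := by
      refine ⟨Nat.log 2 ⌊r⌋₊, ?_, ?_⟩
      · have hm1 : 1 ≤ ⌊r⌋₊ := Nat.le_floor (by push_cast; linarith)
        have h1 : (2:ℕ) ^ Nat.log 2 ⌊r⌋₊ ≤ ⌊r⌋₊ := Nat.pow_log_le_self 2 (by omega)
        have h2 : ((⌊r⌋₊:ℕ):ℝ) ≤ r := Nat.floor_le (le_of_lt hrpos)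
        calc (2:ℝ) ^ Nat.log 2 ⌊r⌋₊ = ((2 ^ Nat.log 2 ⌊r⌋₊ : ℕ) : ℝ) := by push_cast; ring
          _ ≤ ((⌊r⌋₊:ℕ):ℝ) := by exact_mod_cast h1
          _ ≤ r := h2
      · have h1 : ⌊r⌋₊ < 2 ^ (Nat.log 2 ⌊r⌋₊ + 1) := Nat.lt_pow_succ_log_self (by norm_num) _
        have h2 : r < ((⌊r⌋₊:ℕ):ℝ) + 1 := Nat.lt_floor_add_one r
        have h3 : ((⌊r⌋₊:ℕ):ℝ) + 1 ≤ ((2 ^ (Nat.log 2 ⌊r⌋₊ + 1) : ℕ) : ℝ) := by exact_mod_cast h1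
        have h4 : ((2 ^ (Nat.log 2 ⌊r⌋₊ + 1) : ℕ) : ℝ) = 2 * 2 ^ Nat.log 2 ⌊r⌋₊ := by
          push_cast; ring
        linarith
    set s : ℝ := 2 ^ N with hsdef
    have hs0 : (0:ℝ) < s := by positivity
    -- split the sum
    have hSsum := hS.summable
    have hBsumm := hB.summable
    have hAsumm := hA.summable
    have hsplit := Summable.sum_add_tsum_nat_add (f := fun n => c n * γ n) N hSsum
    rw [hS.tsum_eq] at hsplit
    set H : ℝ := ∑ n ∈ Finset.range N, c n * γ n with hH
    set T : ℝ := ∑' n, c (n + N) * γ (n + N) with hT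
    -- tail facts
    have hStail : HasSum (fun n => c (n + N) * γ (n + N)) T :=
      ((summable_nat_add_iff N).2 hSsum).hasSum
    have hBtail : Summable (fun n => γ (n + N) ^ 2) := (summable_nat_add_iff N).2 hBsumm
    set tγ : ℝ := ∑' n, γ (n + N) ^ 2 with htγ
    have hBtailsum : HasSum (fun n => γ (n + N) ^ 2) tγ := hBtail.hasSum
    have htγB : tγ ≤ B ^ 2 := by
      have h := Summable.sum_add_tsum_nat_add (f := fun n => γ n ^ 2) N hBsumm
      rw [hB.tsum_eq] at h
      have hhead : 0 ≤ ∑ n ∈ Finset.range N, γ n ^ 2 :=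
        Finset.sum_nonneg fun _ _ => sq_nonneg _
      linarith
    have htγ0 : 0 ≤ tγ := tsum_nonneg fun _ => sq_nonneg _
    -- tail of c^2 sums to s⁻¹
    have heqc : (fun n => c (n + N) ^ 2) = fun n => ((1:ℝ)/2) ^ (N+1) * ((1:ℝ)/2) ^ n := by
      funext n
      show ((2:ℝ) ^ (-(((n + N : ℕ):ℝ)+1)/2)) ^ 2 = _
      rw [csq, rpow_neg_eq, show n + N + 1 = (N + 1) + n by omega, pow_add]
    have hcsqsum : HasSum (fun n => c (n + N) ^ 2) s⁻¹ := by
      have hg : HasSum (fun n : ℕ => ((1:ℝ)/2) ^ (N+1) * ((1:ℝ)/2) ^ n) (((1:ℝ)/2) ^ (N+1) * 2) :=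
        hasSum_geometric_two.mul_left _
      have hval : ((1:ℝ)/2) ^ (N+1) * 2 = s⁻¹ := by
        rw [div_pow, one_pow]
        field_simp [hsdef]
        ring
      rw [heqc, ← hval]; exact hg
    -- bound the tail
    set σ : ℝ := Real.sqrt s with hσ
    have hσpos : 0 < σ := Real.sqrt_pos.2 hs0
    have hσsq : σ ^ 2 = s := Real.sq_sqrt hs0.le
    set x : ℝ := σ * B with hx
    have hxpos : 0 < x := mul_pos hσpos hBpos
    have hTbound : T ≤ B / σ := by
      have hbnd : HasSum (fun n => (x * c (n + N) ^ 2 + γ (n + N) ^ 2 / x) / 2)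
          ((x * s⁻¹ + tγ / x) / 2) :=
        (((hcsqsum.mul_left x).add (hBtailsum.div_const x)).div_const 2)
      have h1 : T ≤ (x * s⁻¹ + tγ / x) / 2 :=
        hasSum_le (fun n => amgm_aux hxpos _ _) hStail hbnd
      have h2 : (x * s⁻¹ + tγ / x) / 2 ≤ (x * s⁻¹ + B ^ 2 / x) / 2 := by
        gcongr
      have h3 : (x * s⁻¹ + B ^ 2 / x) / 2 = B / σ := by
        rw [hx, ← hσsq]
        field_simp
        ring
      linarith
    -- bound the head
    set τ : ℝ := Real.sqrt (2*s) with hτ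
    have hτpos : 0 < τ := Real.sqrt_pos.2 (by linarith)
    have hτsq : τ ^ 2 = 2*s := Real.sq_sqrt (by linarith)
    set y : ℝ := A / τ with hy
    have hypos : 0 < y := div_pos hApos hτpos
    have hHbound : H ≤ A * τ := by
      have hpt : ∀ n : ℕ, c n * γ n ≤
          (y * ((c n)⁻¹) ^ 2 + ((2:ℝ) ^ (-((n:ℝ)+1)) * γ n) ^ 2 / y) / 2 := by
        intro n
        have hkey := amgm_aux hypos (c n)⁻¹ ((2:ℝ) ^ (-((n:ℝ)+1)) * γ n)
        have heq : (c n)⁻¹ * ((2:ℝ) ^ (-((n:ℝ)+1)) * γ n) = c n * γ n := by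
          have h1 : (2:ℝ) ^ (-((n:ℝ)+1)) = c n ^ 2 := (csq n).symm
          have h2 : c n ≠ 0 := (hcpos n).ne'
          rw [h1]
          field_simp
        rw [heq] at hkey; exact hkey
      have h1 : H ≤ ∑ n ∈ Finset.range N,
          (y * ((c n)⁻¹) ^ 2 + ((2:ℝ) ^ (-((n:ℝ)+1)) * γ n) ^ 2 / y) / 2 :=
        Finset.sum_le_sum (fun n _ => hpt n)
      have h2 : ∑ n ∈ Finset.range N,
            (y * ((c n)⁻¹) ^ 2 + ((2:ℝ) ^ (-((n:ℝ)+1)) * γ n) ^ 2 / y) / 2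
          = (y * (∑ n ∈ Finset.range N, ((c n)⁻¹) ^ 2)
            + (∑ n ∈ Finset.range N, ((2:ℝ) ^ (-((n:ℝ)+1)) * γ n) ^ 2) / y) / 2 := by
        rw [← Finset.sum_div, Finset.sum_add_distrib, ← Finset.mul_sum, ← Finset.sum_div]
      have h3 : ∑ n ∈ Finset.range N, ((c n)⁻¹) ^ 2 ≤ 2 * s := by
        have hterm : ∀ n : ℕ, ((c n)⁻¹) ^ 2 = 2 * (2:ℝ) ^ n := by
          intro n
          show (((2:ℝ) ^ (-((n:ℝ)+1)/2))⁻¹) ^ 2 = _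
          rw [inv_pow, csq n, rpow_neg_eq n, one_div, inv_pow, inv_inv, pow_succ]
          ring
        rw [Finset.sum_congr rfl (fun n _ => hterm n), ← Finset.mul_sum,
          geom_sum_eq (by norm_num : (2:ℝ) ≠ 1) N]
        rw [show (2:ℝ) - 1 = 1 by norm_num, div_one]
        have h2N : (0:ℝ) < s := hs0
        rw [hsdef] at h2N ⊢
        linarith
      have h4 : ∑ n ∈ Finset.range N, ((2:ℝ) ^ (-((n:ℝ)+1)) * γ n) ^ 2 ≤ A ^ 2 :=
        sum_le_hasSum (Finset.range N) (fun _ _ => sq_nonneg _) hA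
      have h5 : (y * (∑ n ∈ Finset.range N, ((c n)⁻¹) ^ 2)
            + (∑ n ∈ Finset.range N, ((2:ℝ) ^ (-((n:ℝ)+1)) * γ n) ^ 2) / y) / 2
          ≤ (y * (2*s) + A ^ 2 / y) / 2 := by
        gcongr
      have h6 : (y * (2*s) + A ^ 2 / y) / 2 = A * τ := by
        rw [hy, ← hτsq]
        field_simp
        ring
      linarith
    -- combine
    have hAτ : A * τ ≤ Real.sqrt 2 * Real.sqrt B * Real.sqrt A := by
      have h1 : A * τ = Real.sqrt (A ^ 2 * (2*s)) := by
        rw [Real.sqrt_mul (sq_nonneg A), Real.sqrt_sq hApos.le, hτ]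
      have hAs : A * s ≤ B := by
        rw [hr] at hs1
        have := (le_div_iff₀ hApos).1 hs1
        linarith
      have h2 : A ^ 2 * (2*s) ≤ 2 * (B*A) := by nlinarith
      calc A * τ = Real.sqrt (A ^ 2 * (2*s)) := h1
        _ ≤ Real.sqrt (2 * (B*A)) := Real.sqrt_le_sqrt h2
        _ = Real.sqrt 2 * Real.sqrt B * Real.sqrt A := by
            rw [Real.sqrt_mul (by norm_num : (0:ℝ) ≤ 2), Real.sqrt_mul hBpos.le, mul_assoc]
    have hBσ : B / σ ≤ Real.sqrt 2 * Real.sqrt B * Real.sqrt A := by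
      have h1 : B / σ = Real.sqrt (B ^ 2 / s) := by
        rw [Real.sqrt_div (sq_nonneg B), Real.sqrt_sq hBpos.le, hσ]
      have hBs : B ≤ 2 * s * A := by
        rw [hr] at hs2
        have := (div_le_iff₀ hApos).1 hs2
        linarith
      have h2 : B ^ 2 / s ≤ 2 * (B*A) := by
        rw [div_le_iff₀ hs0]
        nlinarith
      calc B / σ = Real.sqrt (B ^ 2 / s) := h1
        _ ≤ Real.sqrt (2 * (B*A)) := Real.sqrt_le_sqrt h2
        _ = Real.sqrt 2 * Real.sqrt B * Real.sqrt A := by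
            rw [Real.sqrt_mul (by norm_num : (0:ℝ) ≤ 2), Real.sqrt_mul hBpos.le, mul_assoc]
    linarith



/-- Let `U` be a separable real Hilbert space with orthonormal basis
`(φₙ)ₙ≥1`, `L : U → U` the diagonal operator `L φₙ = 2^(−n) φₙ`, and `u† = Σₙ 2^(−n/2) φₙ`.
Then for every `u ∈ U`, `⟨u†, u⟩ ≤ 2√2 ‖u‖^(1/2) ‖Lu‖^(1/2)`.
(Lean index `n : ℕ` corresponds to the paper's `n + 1 ≥ 1`.) -/
theorem stmt10 {U : Type*} [NormedAddCommGroup U] [InnerProductSpace ℝ U] [CompleteSpace U]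
    (φ : HilbertBasis ℕ ℝ U) (L : U →L[ℝ] U)
    (hL : ∀ n : ℕ, L (φ n) = ((2 : ℝ) ^ (-((n : ℝ) + 1))) • φ n)
    (udag : U)
    (hu : HasSum (fun n : ℕ => ((2 : ℝ) ^ (-((n : ℝ) + 1) / 2)) • φ n) udag) :
    ∀ u : U, (inner ℝ udag u : ℝ) ≤
      2 * Real.sqrt 2 * ‖u‖ ^ ((1 : ℝ) / 2) * ‖L u‖ ^ ((1 : ℝ) / 2) := by
  intro u
  have horth := orthonormal_iff_ite.mp φ.orthonormal
  set γ : ℕ → ℝ := fun n => (inner ℝ (φ n) u : ℝ) with hγ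
  -- ⟪udag, u⟫ = ∑ 2^{-(n+1)/2} γ n
  have hS : HasSum (fun n : ℕ => (2:ℝ) ^ (-((n:ℝ)+1)/2) * γ n) (inner ℝ udag u : ℝ) := by
    have h1 := hu.mapL (innerSL ℝ u)
    simp only [innerSL_apply_apply] at h1
    rw [real_inner_comm udag u] at h1
    convert h1 using 2 with n
    · rfl
    rw [inner_smul_right, real_inner_comm (φ n) u]
  -- coefficients of L u
  have hLu : ∀ n : ℕ, (inner ℝ (φ n) (L u) : ℝ) = (2:ℝ) ^ (-((n:ℝ)+1)) * γ n := by
    intro n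
    have h1 : HasSum (fun m : ℕ => φ.repr u m • L (φ m)) (L u) := by
      have := (φ.hasSum_repr u).mapL L
      simpa only [map_smul] using this
    have h2 := h1.mapL (innerSL ℝ (φ n))
    have h3 : HasSum (fun m : ℕ => if n = m then (2:ℝ) ^ (-((n:ℝ)+1)) * γ n else 0)
        (inner ℝ (φ n) (L u) : ℝ) := by
      convert h2 using 2 with m
      · rfl
      rw [innerSL_apply_apply, hL m, inner_smul_right, inner_smul_right, horth n m]
      by_cases h : n = m
      · subst h
        simp [φ.repr_apply_apply]
        ring
      · simp [h]
      · rfl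
    have h4 : HasSum (fun m : ℕ => if n = m then (2:ℝ) ^ (-((n:ℝ)+1)) * γ n else 0)
        ((2:ℝ) ^ (-((n:ℝ)+1)) * γ n) := by
      convert hasSum_ite_eq n ((2:ℝ) ^ (-((n:ℝ)+1)) * γ n) using 2 with m
      simp [eq_comm]
    exact h3.unique h4
  -- Parseval for u
  have hB : HasSum (fun n : ℕ => γ n ^ 2) (‖u‖ ^ 2) := by
    have h1 := φ.hasSum_inner_mul_inner u u
    rw [real_inner_self_eq_norm_sq] at h1
    convert h1 using 2 with n
    · rfl
    rw [sq, real_inner_comm (φ n) u]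
  -- Parseval for L u
  have hA : HasSum (fun n : ℕ => ((2:ℝ) ^ (-((n:ℝ)+1)) * γ n) ^ 2) (‖L u‖ ^ 2) := by
    have h1 := φ.hasSum_inner_mul_inner (L u) (L u)
    rw [real_inner_self_eq_norm_sq] at h1
    convert h1 using 2 with n
    · rfl
    rw [sq, real_inner_comm (φ n) (L u), hLu n]
  have hmain := core γ _ _ _ (norm_nonneg (L u)) (norm_nonneg u) hS hA hB
  rw [← Real.sqrt_eq_rpow, ← Real.sqrt_eq_rpow]
  exact hmain
end

section
/- Assume u† satisfies 2⟨u†,u⟩ ≤ β ‖Lu‖^μ + γ ‖u‖² for all u ∈ U, with μ ∈ (0,1], β ≥ 0, γ ∈ (0,1). Let y = L u†, δ > 0, y^δ ∈ V with ‖y^δ − y‖ ≤ δ, and for α > 0 let u_α^δ be the minimizer over u ∈ U of ‖Lu − y^δ‖² + α‖u‖². Then ‖u_α^δ − u†‖² ≤ (2/(1−γ)) δ²/α + (β^(2/(2−μ)) (2−μ)/(2(1−γ))) α^(μ/(2−μ)). -/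
set_option maxHeartbeats 1000000

/-- Assume `u†` satisfies `2⟨u†,u⟩ ≤ β ‖Lu‖^μ + γ ‖u‖²` for all `u ∈ U`,
with `μ ∈ (0,1]`, `β ≥ 0`, `γ ∈ (0,1)`. Let `y = L u†`, `δ > 0`, `y^δ ∈ V` with
`‖y^δ − y‖ ≤ δ`, and for `α > 0` let `u_α^δ` minimize `‖Lu − y^δ‖² + α‖u‖²` over `u ∈ U`.
Then `‖u_α^δ − u†‖² ≤ (2/(1−γ)) δ²/α + (β^(2/(2−μ)) (2−μ)/(2(1−γ))) α^(μ/(2−μ))`. -/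
theorem stmt12 {U V : Type*} [NormedAddCommGroup U] [InnerProductSpace ℝ U]
    [NormedAddCommGroup V] [InnerProductSpace ℝ V]
    (L : U →L[ℝ] V) (udag : U) (μ β γ : ℝ)
    (hμ0 : 0 < μ) (hμ1 : μ ≤ 1) (hβ : 0 ≤ β) (hγ0 : 0 < γ) (hγ1 : γ < 1)
    (hvi : ∀ u : U, 2 * (inner ℝ udag u : ℝ) ≤ β * ‖L u‖ ^ μ + γ * ‖u‖ ^ 2)
    (δ : ℝ) (hδ : 0 < δ) (yδ : V) (hyδ : ‖yδ - L udag‖ ≤ δ)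
    (α : ℝ) (hα : 0 < α) (uad : U)
    (hmin : ∀ u : U, ‖L uad - yδ‖ ^ 2 + α * ‖uad‖ ^ 2 ≤ ‖L u - yδ‖ ^ 2 + α * ‖u‖ ^ 2) :
    ‖uad - udag‖ ^ 2 ≤
      (2 / (1 - γ)) * (δ ^ 2 / α) +
        (β ^ (2 / (2 - μ)) * (2 - μ) / (2 * (1 - γ))) * α ^ (μ / (2 - μ)) := by
  set T := ‖L uad - yδ‖ with hTdef
  have hT0 : 0 ≤ T := norm_nonneg _
  have h2μ : (0:ℝ) < 2 - μ := by linarith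
  have h1γ : (0:ℝ) < 1 - γ := by linarith
  set D := δ + T with hDdef
  have hD0 : 0 < D := by positivity
  set C := β ^ (2 / (2 - μ)) * α ^ (μ / (2 - μ)) with hCdef
  have hC0 : 0 ≤ C := by positivity
  -- minimality
  have hLd : ‖L udag - yδ‖ ≤ δ := by rw [norm_sub_rev]; exact hyδ
  have hTδ : T ^ 2 + α * ‖uad‖ ^ 2 ≤ δ ^ 2 + α * ‖udag‖ ^ 2 := by
    have h := hmin udag
    nlinarith [norm_nonneg (L udag - yδ)]
  -- expansion
  have hexp : ‖uad - udag‖ ^ 2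
      = ‖uad‖ ^ 2 - ‖udag‖ ^ 2 + 2 * (inner ℝ udag (udag - uad) : ℝ) := by
    rw [norm_sub_sq_real, inner_sub_right, real_inner_self_eq_norm_sq,
      real_inner_comm udag uad]
    ring
  -- variational inequality
  have hv := hvi (udag - uad)
  rw [norm_sub_rev udag uad] at hv
  -- triangle
  have hLtri : ‖L (udag - uad)‖ ≤ D := by
    have e : L (udag - uad) = (L udag - yδ) - (L uad - yδ) := by
      rw [map_sub]; abel
    rw [e]
    refine le_trans (norm_sub_le _ _) ?_
    rw [hDdef, hTdef]; linarith
  have hβM : β * ‖L (udag - uad)‖ ^ μ ≤ β * D ^ μ :=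
    mul_le_mul_of_nonneg_left (Real.rpow_le_rpow (norm_nonneg _) hLtri hμ0.le) hβ
  -- Young's inequality
  have hpq : Real.HolderConjugate (2 / μ) (2 / (2 - μ)) := by
    constructor
    · rw [inv_div, inv_div]; ring
    · positivity
    · positivity
  have hab := Real.young_inequality_of_nonneg
    (a := (D ^ 2 / α) ^ (μ / 2)) (b := β * α ^ (μ / 2))
    (by positivity) (by positivity) hpq
  have eq1 : (D ^ 2 / α) ^ (μ / 2) * (β * α ^ (μ / 2)) = β * D ^ μ := by
    have h1 : (D ^ 2 / α) ^ (μ / 2) = D ^ μ / α ^ (μ / 2) := by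
      rw [Real.div_rpow (by positivity) hα.le, ← Real.rpow_natCast D 2,
        ← Real.rpow_mul hD0.le]
      norm_num
      rw [show (2:ℝ) * (μ / 2) = μ by ring]
    have hne : α ^ (μ / 2) ≠ 0 := by positivity
    rw [h1]; field_simp
  have eq2 : ((D ^ 2 / α) ^ (μ / 2)) ^ (2 / μ) = D ^ 2 / α := by
    rw [← Real.rpow_mul (by positivity)]
    rw [show μ / 2 * (2 / μ) = 1 by field_simp]
    exact Real.rpow_one _
  have eq3 : (β * α ^ (μ / 2)) ^ (2 / (2 - μ)) = C := by
    rw [Real.mul_rpow hβ (Real.rpow_nonneg hα.le _), ← Real.rpow_mul hα.le]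
    rw [show μ / 2 * (2 / (2 - μ)) = μ / (2 - μ) by
      field_simp]
  rw [eq1, eq2, eq3] at hab
  have e4 : D ^ 2 / α / (2 / μ) = μ / 2 * (D ^ 2 / α) := by
    field_simp
  have e5 : C / (2 / (2 - μ)) = (2 - μ) / 2 * C := by
    field_simp
  rw [e4, e5] at hab
  -- multiply Young by α
  have key : α * (β * D ^ μ) ≤ μ / 2 * D ^ 2 + (2 - μ) / 2 * (C * α) := by
    have h := mul_le_mul_of_nonneg_left hab hα.le
    calc α * (β * D ^ μ) ≤ α * (μ / 2 * (D ^ 2 / α) + (2 - μ) / 2 * C) := h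
      _ = μ / 2 * D ^ 2 + (2 - μ) / 2 * (C * α) := by field_simp
  -- combine
  have hcomb : (1 - γ) * α * ‖uad - udag‖ ^ 2 ≤ 2 * δ ^ 2 + (2 - μ) / 2 * (C * α) := by
    have hv' : α * (2 * (inner ℝ udag (udag - uad) : ℝ))
        ≤ α * (β * D ^ μ) + α * (γ * ‖uad - udag‖ ^ 2) := by
      have : 2 * (inner ℝ udag (udag - uad) : ℝ) ≤ β * D ^ μ + γ * ‖uad - udag‖ ^ 2 :=
        le_trans hv (by linarith)
      have h := mul_le_mul_of_nonneg_left this hα.le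
      rw [mul_add] at h
      exact h
    have hexp' : α * ‖uad - udag‖ ^ 2
        = α * ‖uad‖ ^ 2 - α * ‖udag‖ ^ 2 + α * (2 * (inner ℝ udag (udag - uad) : ℝ)) := by
      rw [hexp]; ring
    have hD2 : μ / 2 * D ^ 2 ≤ μ * δ ^ 2 + μ * T ^ 2 := by
      rw [hDdef]; nlinarith [mul_nonneg hμ0.le (sq_nonneg (δ - T))]
    have hμT : μ * T ^ 2 ≤ T ^ 2 := by nlinarith [sq_nonneg T]
    have hμδ : μ * δ ^ 2 ≤ δ ^ 2 := by nlinarith [sq_nonneg δ]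
    linarith
  -- divide by (1-γ)α
  have hfin : ‖uad - udag‖ ^ 2
      ≤ (2 * δ ^ 2 + (2 - μ) / 2 * (C * α)) / ((1 - γ) * α) := by
    rw [le_div_iff₀ (by positivity)]
    linarith [hcomb]
  refine hfin.trans (le_of_eq ?_)
  rw [hCdef]
  field_simp
end

section
/- Let u_α^δ be the Tikhonov minimizer for data y^δ with ‖y^δ − Lu†‖ ≤ δ, where u† satisfies 2⟨u†,u⟩ ≤ β‖Lu‖^μ + γ‖u‖² (μ ∈ (0,1], β ≥ 0, γ ∈ (0,1)). Then ‖Lu_α^δ − y^δ‖² + α‖u_α^δ − u†‖² ≤ δ² + αβ‖L(u_α^δ − u†)‖^μ + αγ‖u_α^δ − u†‖². -/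
/-- Let `u_α^δ` be the Tikhonov minimizer for data `y^δ` with
`‖y^δ − Lu†‖ ≤ δ`, where `u†` satisfies `2⟨u†,u⟩ ≤ β‖Lu‖^μ + γ‖u‖²`
(`μ ∈ (0,1]`, `β ≥ 0`, `γ ∈ (0,1)`). Then
`‖Lu_α^δ − y^δ‖² + α‖u_α^δ − u†‖² ≤ δ² + αβ‖L(u_α^δ − u†)‖^μ + αγ‖u_α^δ − u†‖²`. -/
theorem stmt13 {U V : Type*} [NormedAddCommGroup U] [InnerProductSpace ℝ U]
    [NormedAddCommGroup V] [InnerProductSpace ℝ V]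
    (L : U →L[ℝ] V) (udag : U) (μ β γ : ℝ)
    (hμ0 : 0 < μ) (hμ1 : μ ≤ 1) (hβ : 0 ≤ β) (hγ0 : 0 < γ) (hγ1 : γ < 1)
    (hvi : ∀ u : U, 2 * (inner ℝ udag u : ℝ) ≤ β * ‖L u‖ ^ μ + γ * ‖u‖ ^ 2)
    (δ : ℝ) (hδ : 0 < δ) (yδ : V) (hyδ : ‖yδ - L udag‖ ≤ δ)
    (α : ℝ) (hα : 0 < α) (uad : U)
    (hmin : ∀ u : U, ‖L uad - yδ‖ ^ 2 + α * ‖uad‖ ^ 2 ≤ ‖L u - yδ‖ ^ 2 + α * ‖u‖ ^ 2) :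
    ‖L uad - yδ‖ ^ 2 + α * ‖uad - udag‖ ^ 2 ≤
      δ ^ 2 + α * β * ‖L (uad - udag)‖ ^ μ + α * γ * ‖uad - udag‖ ^ 2 := by
  have h1 : ‖L udag - yδ‖ ^ 2 ≤ δ ^ 2 := by
    rw [norm_sub_rev]
    exact pow_le_pow_left₀ (norm_nonneg _) hyδ 2
  have hm := hmin udag
  have hvi' := hvi (udag - uad)
  have hLeq : ‖L (udag - uad)‖ = ‖L (uad - udag)‖ := by
    rw [map_sub, map_sub, norm_sub_rev]
  have hNeq : ‖udag - uad‖ = ‖uad - udag‖ := norm_sub_rev _ _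
  rw [hLeq, hNeq] at hvi'
  have hid : ‖uad - udag‖ ^ 2
      = ‖uad‖ ^ 2 - ‖udag‖ ^ 2 + 2 * (inner ℝ udag (udag - uad) : ℝ) := by
    have h := @norm_sub_sq_real U _ _ uad udag
    have h2 : (inner ℝ udag (udag - uad) : ℝ) = ‖udag‖ ^ 2 - inner ℝ udag uad := by
      rw [inner_sub_right, real_inner_self_eq_norm_sq]
    have h3 : (inner ℝ uad udag : ℝ) = inner ℝ udag uad := real_inner_comm _ _
    rw [h2]
    rw [h3] at h
    linarith
  nlinarith [hvi', hm, h1, hα.le]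
end

section
/- Under the inhomogeneous variational inequality with parameter μ = 2ν/(1+ν) for some ν ∈ (0,1] (i.e., 2⟨u†,u⟩ ≤ β‖Lu‖^μ + γ‖u‖² with γ ∈ (0,1)), there exists C > 0 such that for all δ > 0 and all ỹ ∈ V with ‖ỹ − Lu†‖ ≤ δ, the Tikhonov minimizer with α = δ^(2−μ) satisfies ‖u_α(ỹ) − u†‖ ≤ C δ^(ν/(1+ν)). -/
open scoped NNReal

lemma aux_rpow_add_le (a b p : ℝ) (ha : 0 ≤ a) (hb : 0 ≤ b) (hp0 : 0 ≤ p) (hp1 : p ≤ 1) :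
    (a + b) ^ p ≤ a ^ p + b ^ p := by
  have h := NNReal.rpow_add_le_add_rpow a.toNNReal b.toNNReal hp0 hp1
  have h2 : ((a.toNNReal + b.toNNReal : ℝ≥0) : ℝ) ^ p ≤ ((a.toNNReal ^ p + b.toNNReal ^ p : ℝ≥0) : ℝ) := by
    rw [← NNReal.coe_rpow]; exact_mod_cast h
  simpa [NNReal.coe_rpow, Real.coe_toNNReal a ha, Real.coe_toNNReal b hb] using h2

set_option maxHeartbeats 1000000 in
/-- Under the inhomogeneous variational inequality with parameter
`μ = 2ν/(1+ν)` for some `ν ∈ (0,1]` (i.e. `2⟨u†,u⟩ ≤ β‖Lu‖^μ + γ‖u‖²` with `γ ∈ (0,1)`),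
there exists `C > 0` such that for all `δ > 0` and all `ỹ ∈ V` with `‖ỹ − Lu†‖ ≤ δ`,
the Tikhonov minimizer with `α = δ^(2−μ)` satisfies `‖u_α(ỹ) − u†‖ ≤ C δ^(ν/(1+ν))`. -/
theorem stmt14 {U V : Type*} [NormedAddCommGroup U] [InnerProductSpace ℝ U]
    [NormedAddCommGroup V] [InnerProductSpace ℝ V]
    (L : U →L[ℝ] V) (udag : U) (ν β γ : ℝ)
    (hν0 : 0 < ν) (hν1 : ν ≤ 1) (hβ : 0 ≤ β) (hγ0 : 0 < γ) (hγ1 : γ < 1)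
    (hvi : ∀ u : U, 2 * (inner ℝ udag u : ℝ) ≤
      β * ‖L u‖ ^ (2 * ν / (1 + ν)) + γ * ‖u‖ ^ 2) :
    ∃ C : ℝ, 0 < C ∧ ∀ δ : ℝ, 0 < δ → ∀ ytil : V, ‖ytil - L udag‖ ≤ δ →
      ∀ uα : U,
        (∀ u : U, ‖L uα - ytil‖ ^ 2 + δ ^ (2 - 2 * ν / (1 + ν)) * ‖uα‖ ^ 2 ≤
          ‖L u - ytil‖ ^ 2 + δ ^ (2 - 2 * ν / (1 + ν)) * ‖u‖ ^ 2) →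
        ‖uα - udag‖ ≤ C * δ ^ (ν / (1 + ν)) := by
  set μ : ℝ := 2 * ν / (1 + ν) with hμdef
  have h1ν : (0:ℝ) < 1 + ν := by linarith
  have hμpos : 0 < μ := by positivity
  have hμle : μ ≤ 1 := by rw [hμdef, div_le_one h1ν]; linarith
  have h2μ : (0:ℝ) < 2 - μ := by linarith
  set K : ℝ := 1 + β + β ^ ((2:ℝ)/(2-μ)) with hKdef
  have hK : 0 < K := by positivity
  have h1γ : (0:ℝ) < 1 - γ := by linarith
  refine ⟨Real.sqrt (K / (1 - γ)), Real.sqrt_pos.mpr (by positivity), ?_⟩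
  intro δ hδ ytil hy uα hmin
  set α : ℝ := δ ^ (2 - μ) with hα
  have hαpos : 0 < α := Real.rpow_pos_of_pos hδ _
  set t : ℝ := ‖L uα - ytil‖ with ht
  have ht0 : 0 ≤ t := norm_nonneg _
  -- Step 1: minimization property at udag
  have hstep1 : t ^ 2 + α * ‖uα‖ ^ 2 ≤ δ ^ 2 + α * ‖udag‖ ^ 2 := by
    have h := hmin udag
    have hle : ‖L udag - ytil‖ ≤ δ := by rw [norm_sub_rev]; exact hy
    nlinarith [norm_nonneg (L udag - ytil)]
  -- Step 2: variational inequality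
  have hnormsq : ‖uα - udag‖ ^ 2 = ‖uα‖ ^ 2 - 2 * (inner ℝ uα udag : ℝ) + ‖udag‖ ^ 2 :=
    norm_sub_sq_real uα udag
  have hvi' := hvi (udag - uα)
  have hinner : (inner ℝ udag (udag - uα) : ℝ) = ‖udag‖ ^ 2 - (inner ℝ udag uα : ℝ) := by
    rw [inner_sub_right, real_inner_self_eq_norm_sq]
  have hnrev : ‖udag - uα‖ = ‖uα - udag‖ := norm_sub_rev _ _
  have hLrev : ‖L (udag - uα)‖ = ‖L uα - L udag‖ := by
    rw [map_sub, norm_sub_rev]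
  rw [hinner, hnrev, hLrev] at hvi'
  have hcomm : (inner ℝ uα udag : ℝ) = (inner ℝ udag uα : ℝ) := real_inner_comm _ _
  have hstep2 : (1 - γ) * ‖uα - udag‖ ^ 2 ≤
      ‖uα‖ ^ 2 - ‖udag‖ ^ 2 + β * ‖L uα - L udag‖ ^ μ := by
    nlinarith [hnormsq, hvi']
  -- Step 3: first term bound
  have hstep3 : ‖uα‖ ^ 2 - ‖udag‖ ^ 2 ≤ (δ ^ 2 - t ^ 2) / α := by
    rw [le_div_iff₀ hαpos]; nlinarith
  -- δ^2 / α = δ^μ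
  have hδ2 : (δ : ℝ) ^ (2:ℕ) / α = δ ^ μ := by
    rw [hα, ← Real.rpow_natCast δ 2, ← Real.rpow_sub hδ]
    norm_num
  -- Step 4: triangle inequality and subadditivity
  have htri : ‖L uα - L udag‖ ≤ t + δ := by
    have heq : L uα - L udag = (L uα - ytil) + (ytil - L udag) := by abel
    rw [heq]
    exact le_trans (norm_add_le _ _) (by linarith [norm_nonneg (L uα - ytil)])
  have hstep4 : ‖L uα - L udag‖ ^ μ ≤ t ^ μ + δ ^ μ := by
    calc ‖L uα - L udag‖ ^ μ ≤ (t + δ) ^ μ :=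
          Real.rpow_le_rpow (norm_nonneg _) htri hμpos.le
      _ ≤ t ^ μ + δ ^ μ := aux_rpow_add_le t δ μ ht0 hδ.le hμpos.le hμle
  -- Step 6: key Young-type bound
  have hkey : β * t ^ μ - t ^ 2 / α ≤ β ^ ((2:ℝ)/(2-μ)) * δ ^ μ := by
    rcases le_or_gt (β * t ^ μ) (t ^ 2 / α) with h | h
    · have : (0:ℝ) ≤ β ^ ((2:ℝ)/(2-μ)) * δ ^ μ := by positivity
      linarith
    · have htpos : 0 < t := by
        rcases lt_or_eq_of_le ht0 with h' | h'
        · exact h'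
        · exfalso
          rw [← h'] at h
          rw [Real.zero_rpow hμpos.ne'] at h
          simp at h
      have hμt : 0 < t ^ μ := Real.rpow_pos_of_pos htpos μ
      have hβpos : 0 < β := by
        have h0 : (0:ℝ) ≤ t ^ 2 / α := by positivity
        have hb : 0 < β * t ^ μ := lt_of_le_of_lt h0 h
        by_contra hc
        push_neg at hc
        exact absurd hb (not_lt.mpr (mul_nonpos_of_nonpos_of_nonneg hc hμt.le))
      have h2 : t ^ (2 - μ) < β * α := by
        have hts : (t:ℝ) ^ (2:ℕ) = t ^ μ * t ^ (2-μ) := by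
          rw [← Real.rpow_natCast t 2, ← Real.rpow_add htpos]; norm_num
        rw [div_lt_iff₀ hαpos, hts] at h
        exact (mul_lt_mul_iff_right₀ hμt).mp (by nlinarith : t ^ μ * t ^ (2-μ) < t ^ μ * (β * α))
      have hconv : t ^ μ = (t ^ (2-μ)) ^ (μ/(2-μ)) := by
        rw [← Real.rpow_mul ht0]
        congr 1
        field_simp
      have hle2 : (t ^ (2-μ)) ^ (μ/(2-μ)) ≤ (β * α) ^ (μ/(2-μ)) :=
        Real.rpow_le_rpow (Real.rpow_nonneg ht0 _) h2.le (by positivity)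
      have hrhs : (β * α) ^ (μ/(2-μ)) = β ^ (μ/(2-μ)) * δ ^ μ := by
        rw [Real.mul_rpow hβ hαpos.le, hα, ← Real.rpow_mul hδ.le]
        congr 2
        field_simp
      have hββ : β * β ^ (μ/(2-μ)) = β ^ ((2:ℝ)/(2-μ)) := by
        nth_rewrite 1 [← Real.rpow_one β]
        rw [← Real.rpow_add hβpos]
        congr 1
        field_simp
        ring
      have hfin : β * t ^ μ ≤ β ^ ((2:ℝ)/(2-μ)) * δ ^ μ := by
        calc β * t ^ μ ≤ β * (β ^ (μ/(2-μ)) * δ ^ μ) := by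
              apply mul_le_mul_of_nonneg_left _ hβ
              rw [hconv]; rw [hrhs] at hle2; exact hle2
          _ = β ^ ((2:ℝ)/(2-μ)) * δ ^ μ := by rw [← hββ]; ring
      have h0 : (0:ℝ) ≤ t ^ 2 / α := by positivity
      linarith
  -- Assemble
  have hmain : (1 - γ) * ‖uα - udag‖ ^ 2 ≤ K * δ ^ μ := by
    have hchain : ‖uα‖ ^ 2 - ‖udag‖ ^ 2 + β * ‖L uα - L udag‖ ^ μ ≤
        (δ ^ 2 - t ^ 2) / α + β * (t ^ μ + δ ^ μ) := by
      have := mul_le_mul_of_nonneg_left hstep4 hβ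
      linarith
    have heq : (δ ^ 2 - t ^ 2) / α = δ ^ μ - t ^ 2 / α := by
      rw [sub_div, hδ2]
    rw [heq] at hchain
    have hmid : (1 - γ) * ‖uα - udag‖ ^ 2 ≤
        δ ^ μ - t ^ 2 / α + β * t ^ μ + β * δ ^ μ := by linarith
    have hδμ0 : (0:ℝ) ≤ δ ^ μ := Real.rpow_nonneg hδ.le _
    rw [hKdef]
    nlinarith [hkey]
  -- Conclude
  have hC2 : Real.sqrt (K / (1 - γ)) ^ 2 = K / (1 - γ) :=
    Real.sq_sqrt (by positivity)
  have hδsplit : δ ^ μ = (δ ^ (ν/(1+ν))) ^ (2:ℕ) := by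
    rw [← Real.rpow_natCast (δ ^ (ν/(1+ν))) 2, ← Real.rpow_mul hδ.le]
    congr 1
    rw [hμdef]
    push_cast
    ring
  have hfinal : ‖uα - udag‖ ^ 2 ≤ (Real.sqrt (K / (1 - γ)) * δ ^ (ν/(1+ν))) ^ 2 := by
    rw [mul_pow, hC2]
    calc ‖uα - udag‖ ^ 2 ≤ K / (1 - γ) * δ ^ μ := by
          rw [div_mul_eq_mul_div, le_div_iff₀ h1γ]; nlinarith
      _ = K / (1 - γ) * (δ ^ (ν/(1+ν))) ^ (2:ℕ) := by rw [hδsplit]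
  exact le_of_pow_le_pow_left₀ two_ne_zero (by positivity) hfinal
end

section
/- Let U = ℓ²(ℕ) with orthonormal basis (φₙ), L φₙ = n^(−1/2) φₙ, u† = Σₙ n^(−1) φₙ. For N ≥ 1 set u_N = N^(−1) Σ_{n ≤ N} φₙ. Then 2⟨u†, u_N⟩ / (‖L u_N‖ + ‖u_N‖²) ≥ H_N^(1/2) where H_N = Σ_{n ≤ N} n^(−1); consequently there are no constants β ≥ 0, γ ∈ [0,1) with 2⟨u†,u⟩ ≤ β‖Lu‖ + γ‖u‖² for all u ∈ U. -/
private lemma coeff_eq {U : Type*} [NormedAddCommGroup U] [InnerProductSpace ℝ U]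
    [CompleteSpace U] (φ : HilbertBasis ℕ ℝ U) (udag : U)
    (hu : HasSum (fun n : ℕ => (((n : ℝ) + 1)⁻¹) • φ n) udag) (k : ℕ) :
    (inner ℝ (φ k) udag : ℝ) = ((k : ℝ) + 1)⁻¹ := by
  have h1 := (innerSL ℝ (φ k)).hasSum hu
  have h2 : HasSum (fun n : ℕ => (innerSL ℝ (φ k)) ((((n : ℝ) + 1)⁻¹) • φ n)) (((k:ℝ)+1)⁻¹) := by
    have horth := φ.orthonormal
    have : (fun n : ℕ => (innerSL ℝ (φ k)) ((((n : ℝ) + 1)⁻¹) • φ n))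
        = fun n => if n = k then ((k:ℝ)+1)⁻¹ else 0 := by
      funext n
      have := orthonormal_iff_ite.mp horth k n
      simp only [innerSL_apply_apply, inner_smul_right, this]
      by_cases h : k = n <;> simp [h, eq_comm]
    rw [this]
    exact hasSum_ite_eq k _
  exact h1.unique h2

private lemma key_facts {U : Type*} [NormedAddCommGroup U] [InnerProductSpace ℝ U]
    [CompleteSpace U] (φ : HilbertBasis ℕ ℝ U) (L : U →L[ℝ] U)
    (hL : ∀ n : ℕ, L (φ n) = (((n : ℝ) + 1) ^ (-(1 : ℝ) / 2)) • φ n)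
    (udag : U)
    (hu : HasSum (fun n : ℕ => (((n : ℝ) + 1)⁻¹) • φ n) udag)
    (N : ℕ) (hN : 1 ≤ N) :
    (inner ℝ udag (((N : ℝ)⁻¹) • ∑ n ∈ Finset.range N, φ n) : ℝ)
        = (N : ℝ)⁻¹ * (∑ n ∈ Finset.range N, ((n : ℝ) + 1)⁻¹) ∧
    ‖((N : ℝ)⁻¹) • ∑ n ∈ Finset.range N, φ n‖ ^ 2 = (N : ℝ)⁻¹ ∧
    ‖L (((N : ℝ)⁻¹) • ∑ n ∈ Finset.range N, φ n)‖
        = (N : ℝ)⁻¹ * Real.sqrt (∑ n ∈ Finset.range N, ((n : ℝ) + 1)⁻¹) := by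
  have horth := φ.orthonormal
  have hNpos : (0 : ℝ) < N := by exact_mod_cast hN
  set H : ℝ := ∑ n ∈ Finset.range N, ((n : ℝ) + 1)⁻¹ with hH
  have hH0 : 0 ≤ H := Finset.sum_nonneg fun n _ => by positivity
  set uN : U := ((N : ℝ)⁻¹) • ∑ n ∈ Finset.range N, φ n with huN
  refine ⟨?_, ?_, ?_⟩
  · rw [huN, inner_smul_right, inner_sum]
    congr 1
    refine Finset.sum_congr rfl fun n _ => ?_
    rw [real_inner_comm, coeff_eq φ udag hu n]
  · have huN' : uN = ∑ n ∈ Finset.range N, ((N : ℝ)⁻¹) • φ n := by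
      rw [huN, Finset.smul_sum]
    have : (inner ℝ uN uN : ℝ) = ∑ n ∈ Finset.range N, (N : ℝ)⁻¹ * (N : ℝ)⁻¹ := by
      rw [huN']
      simpa using horth.inner_sum (fun _ => (N : ℝ)⁻¹) (fun _ => (N : ℝ)⁻¹) (Finset.range N)
    rw [← real_inner_self_eq_norm_sq, this, Finset.sum_const, Finset.card_range,
      nsmul_eq_mul]
    field_simp
  · have hc : ∀ n : ℕ, ((n : ℝ) + 1) ^ (-(1 : ℝ) / 2) * ((n : ℝ) + 1) ^ (-(1 : ℝ) / 2)
        = ((n : ℝ) + 1)⁻¹ := by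
      intro n
      rw [← Real.rpow_add (by positivity),
        show (-(1:ℝ)/2 + -(1:ℝ)/2) = -1 by norm_num, Real.rpow_neg_one]
    have hLuN : L uN = ∑ n ∈ Finset.range N,
        ((N : ℝ)⁻¹ * ((n : ℝ) + 1) ^ (-(1 : ℝ) / 2)) • φ n := by
      rw [huN, map_smul, map_sum, Finset.smul_sum]
      refine Finset.sum_congr rfl fun n _ => ?_
      rw [hL n, smul_smul]
    have hsq : (inner ℝ (L uN) (L uN) : ℝ) = (N : ℝ)⁻¹ * (N : ℝ)⁻¹ * H := by
      rw [hLuN]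
      have := horth.inner_sum (fun n => (N : ℝ)⁻¹ * ((n : ℝ) + 1) ^ (-(1 : ℝ) / 2))
        (fun n => (N : ℝ)⁻¹ * ((n : ℝ) + 1) ^ (-(1 : ℝ) / 2)) (Finset.range N)
      simp only [map_mul, RCLike.star_def, starRingEnd_apply, star_trivial] at this
      rw [this, hH, Finset.mul_sum]
      refine Finset.sum_congr rfl fun n _ => ?_
      rw [← hc n]; ring
    have hnorm2 : ‖L uN‖ ^ 2 = (N : ℝ)⁻¹ * (N : ℝ)⁻¹ * H := by
      rw [← real_inner_self_eq_norm_sq, hsq]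
    have : ‖L uN‖ = Real.sqrt ((N : ℝ)⁻¹ * (N : ℝ)⁻¹ * H) := by
      rw [← hnorm2, Real.sqrt_sq (norm_nonneg _)]
    rw [this, Real.sqrt_mul (by positivity), Real.sqrt_mul_self (by positivity)]

/-- Let `U = ℓ²(ℕ)` with orthonormal basis `(φₙ)ₙ≥1`,
`L φₙ = n^(−1/2) φₙ`, `u† = Σₙ n^(−1) φₙ`. For `N ≥ 1` set `u_N = N^(−1) Σ_{n ≤ N} φₙ`.
Then `2⟨u†, u_N⟩ / (‖L u_N‖ + ‖u_N‖²) ≥ H_N^(1/2)` where `H_N = Σ_{n ≤ N} n^(−1)`;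
consequently there are no constants `β ≥ 0`, `γ ∈ [0,1)` with
`2⟨u†,u⟩ ≤ β‖Lu‖ + γ‖u‖²` for all `u ∈ U`.
(Lean index `n : ℕ` corresponds to the paper's `n + 1 ≥ 1`.) -/
theorem stmt19 {U : Type*} [NormedAddCommGroup U] [InnerProductSpace ℝ U] [CompleteSpace U]
    (φ : HilbertBasis ℕ ℝ U) (L : U →L[ℝ] U)
    (hL : ∀ n : ℕ, L (φ n) = (((n : ℝ) + 1) ^ (-(1 : ℝ) / 2)) • φ n)
    (udag : U)
    (hu : HasSum (fun n : ℕ => (((n : ℝ) + 1)⁻¹) • φ n) udag) :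
    (∀ N : ℕ, 1 ≤ N → ∀ uN : U, uN = ((N : ℝ)⁻¹) • ∑ n ∈ Finset.range N, φ n →
      Real.sqrt (∑ n ∈ Finset.range N, ((n : ℝ) + 1)⁻¹) ≤
        2 * (inner ℝ udag uN : ℝ) / (‖L uN‖ + ‖uN‖ ^ 2)) ∧
      ¬ ∃ β γ : ℝ, 0 ≤ β ∧ 0 ≤ γ ∧ γ < 1 ∧
        ∀ u : U, 2 * (inner ℝ udag u : ℝ) ≤ β * ‖L u‖ + γ * ‖u‖ ^ 2 := by
  have hH1 : ∀ N : ℕ, 1 ≤ N → (1 : ℝ) ≤ ∑ n ∈ Finset.range N, ((n : ℝ) + 1)⁻¹ := by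
    intro N hN
    calc (1 : ℝ) = ∑ n ∈ Finset.range 1, ((n : ℝ) + 1)⁻¹ := by simp
    _ ≤ _ := Finset.sum_le_sum_of_subset_of_nonneg
        (Finset.range_subset_range.mpr hN) (fun n _ _ => by positivity)
  have main : ∀ N : ℕ, 1 ≤ N → ∀ uN : U, uN = ((N : ℝ)⁻¹) • ∑ n ∈ Finset.range N, φ n →
      Real.sqrt (∑ n ∈ Finset.range N, ((n : ℝ) + 1)⁻¹) ≤
        2 * (inner ℝ udag uN : ℝ) / (‖L uN‖ + ‖uN‖ ^ 2) := by
    intro N hN uN huN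
    obtain ⟨h1, h2, h3⟩ := key_facts φ L hL udag hu N hN
    rw [huN] at *
    set H : ℝ := ∑ n ∈ Finset.range N, ((n : ℝ) + 1)⁻¹ with hH
    have hNpos : (0 : ℝ) < N := by exact_mod_cast hN
    have hH1' := hH1 N hN
    set s : ℝ := Real.sqrt H with hs
    have hs1 : 1 ≤ s := by
      rw [hs, show (1:ℝ) = Real.sqrt 1 by simp]
      exact Real.sqrt_le_sqrt hH1'
    have hssq : s ^ 2 = H := Real.sq_sqrt (by linarith)
    rw [h1, h2, h3, le_div_iff₀ (by positivity)]
    have hNi : (0:ℝ) < (N:ℝ)⁻¹ := by positivity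
    have hkey : s * (s + 1) ≤ 2 * H := by nlinarith
    nlinarith [mul_le_mul_of_nonneg_left hkey hNi.le]
  refine ⟨main, ?_⟩
  rintro ⟨β, γ, hβ, hγ, -, hineq⟩
  have hdiv := Real.tendsto_sum_range_one_div_nat_succ_atTop
  obtain ⟨N, hNbig⟩ := (hdiv.eventually_gt_atTop ((β + γ + 1) ^ 2)).exists
  have hHeq : (∑ i ∈ Finset.range N, (1 / ((i : ℝ) + 1)))
      = ∑ n ∈ Finset.range N, ((n : ℝ) + 1)⁻¹ := by
    refine Finset.sum_congr rfl fun n _ => by rw [one_div]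
  rw [hHeq] at hNbig
  set H : ℝ := ∑ n ∈ Finset.range N, ((n : ℝ) + 1)⁻¹ with hH
  have hN : 1 ≤ N := by
    by_contra h
    push_neg at h
    interval_cases N
    · simp only [Finset.range_zero, Finset.sum_empty, hH] at hNbig
      nlinarith
  obtain ⟨h1, h2, h3⟩ := key_facts φ L hL udag hu N hN
  have hNpos : (0 : ℝ) < N := by exact_mod_cast hN
  have happ := hineq (((N : ℝ)⁻¹) • ∑ n ∈ Finset.range N, φ n)
  rw [h1, h2, h3] at happ
  set s : ℝ := Real.sqrt H with hs
  have hH0 : (0:ℝ) ≤ H := by nlinarith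
  have hssq : s ^ 2 = H := Real.sq_sqrt hH0
  have hsbig : β + γ + 1 ≤ s := by
    rw [hs]
    have : β + γ + 1 ≤ Real.sqrt ((β + γ + 1) ^ 2) := by
      rw [Real.sqrt_sq (by positivity)]
    exact this.trans (Real.sqrt_le_sqrt hNbig.le)
  -- happ : 2 * (N⁻¹ * H) ≤ β * (N⁻¹ * s) + γ * N⁻¹
  have h2H : 2 * H ≤ β * s + γ := by
    have := mul_le_mul_of_nonneg_left happ hNpos.le
    have hNN : (N : ℝ) * (N : ℝ)⁻¹ = 1 := mul_inv_cancel₀ hNpos.ne'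
    nlinarith
  nlinarith [hsbig, hssq, h2H, hβ, hγ]
end
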